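/- arXiv:1110.5627 — 2 statements merged into one kernel-verified Lean document; each statement's English description precedes it below -/
import Mathlib

section
/- Let g be a finite-dimensional real Lie algebra with a norm and let γ : [0,1] → g be continuous. Then for every t ∈ [0,1] the endomorphism A_γ(t) is an automorphism of the Lie algebra g; that is, A_γ(t)[x,y] = [A_γ(t)x, A_γ(t)y] for all x, y ∈ g. -/
/-- `IsLieBracket B` says that the bilinear map `B = ⁅·,·⁆` makes the
(finite-dimensional, normed) real vector space `g` into a real Lie algebra:
it is alternating and satisfies the Jacobi identity (in Leibniz form). -/
def IsLieBracket {g : Type*} [NormedAddCommGroup g] [NormedSpace ℝ g]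
    (B : g →ₗ[ℝ] g →ₗ[ℝ] g) : Prop :=
  (∀ x : g, B x x = 0) ∧
  (∀ x y z : g, B x (B y z) = B (B x y) z + B y (B x z))

/-- The adjoint endomorphism `ad x = ⁅x, ·⁆` as a continuous linear map. -/
noncomputable def adL {g : Type*} [NormedAddCommGroup g] [NormedSpace ℝ g]
    [FiniteDimensional ℝ g] (B : g →ₗ[ℝ] g →ₗ[ℝ] g) (x : g) : g →L[ℝ] g :=
  LinearMap.toContinuousLinearMap (B x)

/-- `IsTransport B γ A` says that `A : [0,1] → End(g)` is a continuously
differentiable path of linear endomorphisms of `g` with `A 0 = id` and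
`A' t = ad (γ t) ∘ A t` for `t ∈ [0,1]` (one-sided derivatives at the
endpoints, and the derivative is continuous on `[0,1]`). -/
def IsTransport {g : Type*} [NormedAddCommGroup g] [NormedSpace ℝ g]
    [FiniteDimensional ℝ g] (B : g →ₗ[ℝ] g →ₗ[ℝ] g)
    (γ : ℝ → g) (A : ℝ → (g →L[ℝ] g)) : Prop :=
  A 0 = 1 ∧
  (∀ t ∈ Set.Icc (0:ℝ) 1,
    HasDerivWithinAt A ((adL B (γ t)).comp (A t)) (Set.Icc (0:ℝ) 1) t) ∧
  ContinuousOn (fun t => (adL B (γ t)).comp (A t)) (Set.Icc (0:ℝ) 1)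

/-- The path `A_γ : [0,1] → End(g)`, i.e. the unique continuously differentiable
solution of `A 0 = id`, `A' t = ad (γ t) ∘ A t` (chosen via choice; for a
continuous path `γ` it exists and is unique on `[0,1]`). -/
noncomputable def transport {g : Type*} [NormedAddCommGroup g] [NormedSpace ℝ g]
    [FiniteDimensional ℝ g] (B : g →ₗ[ℝ] g →ₗ[ℝ] g) (γ : ℝ → g) :
    ℝ → (g →L[ℝ] g) :=
  letI := Classical.propDecidable (∃ A : ℝ → (g →L[ℝ] g), IsTransport B γ A)
  if h : ∃ A : ℝ → (g →L[ℝ] g), IsTransport B γ A then h.choose else fun _ => 1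

/-- The bracket as a continuous bilinear map. -/
noncomputable def adC {g : Type*} [NormedAddCommGroup g] [NormedSpace ℝ g]
    [FiniteDimensional ℝ g] (B : g →ₗ[ℝ] g →ₗ[ℝ] g) : g →L[ℝ] g →L[ℝ] g :=
  LinearMap.toContinuousLinearMap
    ((LinearMap.toContinuousLinearMap :
      (g →ₗ[ℝ] g) ≃ₗ[ℝ] (g →L[ℝ] g)).toLinearMap ∘ₗ B)

lemma adC_apply {g : Type*} [NormedAddCommGroup g] [NormedSpace ℝ g]
    [FiniteDimensional ℝ g] (B : g →ₗ[ℝ] g →ₗ[ℝ] g) (x y : g) :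
    adC B x y = B x y := by simp [adC]

/-- The key lemma: any solution of the transport ODE intertwines the bracket. -/
lemma isTransport_bracket {g : Type*}
    [NormedAddCommGroup g] [NormedSpace ℝ g] [FiniteDimensional ℝ g]
    (B : g →ₗ[ℝ] g →ₗ[ℝ] g) (hB : IsLieBracket B)
    (γ : ℝ → g) (hγ : ContinuousOn γ (Set.Icc 0 1))
    {A : ℝ → (g →L[ℝ] g)} (hA : IsTransport B γ A) :
    ∀ t ∈ Set.Icc (0:ℝ) 1, ∀ x y : g,
      A t (B x y) = B (A t x) (A t y) := by
  obtain ⟨hA0, hA', _⟩ := hA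
  intro t ht x y
  -- continuity of A on [0,1]
  have hAc : ContinuousOn A (Set.Icc (0:ℝ) 1) :=
    fun s hs => (hA' s hs).continuousWithinAt
  -- uniform Lipschitz bound for the vector field
  have hcont : ContinuousOn (fun s => adC B (γ s)) (Set.Icc (0:ℝ) 1) :=
    (adC B).continuous.comp_continuousOn hγ
  obtain ⟨C, hC⟩ := isCompact_Icc.exists_bound_of_continuousOn hcont
  set K : NNReal := C.toNNReal with hK
  set v : ℝ → g → g :=
    fun s z => if s ∈ Set.Icc (0:ℝ) 1 then adC B (γ s) z else 0 with hv_def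
  have hv : ∀ s, LipschitzWith K (v s) := by
    intro s
    by_cases hs : s ∈ Set.Icc (0:ℝ) 1
    · apply LipschitzWith.of_dist_le_mul
      intro a b
      simp only [hv_def, if_pos hs, dist_eq_norm, ← map_sub]
      calc ‖adC B (γ s) (a - b)‖ ≤ ‖adC B (γ s)‖ * ‖a - b‖ :=
            (adC B (γ s)).le_opNorm _
        _ ≤ (K : ℝ) * ‖a - b‖ := by
            gcongr
            exact (hC s hs).trans (Real.le_coe_toNNReal C)
    · apply LipschitzWith.of_dist_le_mul
      intro a b
      simp only [hv_def, if_neg hs, dist_eq_norm, sub_zero, norm_zero]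
      positivity
  set f : ℝ → g := fun s => A s (B x y) with hf_def
  set G : ℝ → g := fun s => adC B (A s x) (A s y) with hG_def
  have hfc : ContinuousOn f (Set.Icc (0:ℝ) 1) := hAc.clm_apply continuousOn_const
  have hGc : ContinuousOn G (Set.Icc (0:ℝ) 1) := by
    exact ((adC B).continuous.comp_continuousOn
      (hAc.clm_apply continuousOn_const)).clm_apply
      (hAc.clm_apply continuousOn_const)
  have key : ∀ s ∈ Set.Ico (0:ℝ) 1,
      HasDerivWithinAt A ((adL B (γ s)).comp (A s)) (Set.Ici s) s := by
    intro s hs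
    exact (hA' s (Set.Ico_subset_Icc_self hs)).mono_of_mem_nhdsWithin
      (Icc_mem_nhdsGE_of_mem hs)
  have hf' : ∀ s ∈ Set.Ico (0:ℝ) 1,
      HasDerivWithinAt f (v s (f s)) (Set.Ici s) s := by
    intro s hs
    have h1 := (key s hs).clm_apply (hasDerivWithinAt_const s _ (B x y))
    convert h1 using 1
    simp only [hv_def, hf_def]
    rw [if_pos (Set.Ico_subset_Icc_self hs)]
    simp [adL, adC]
  have hG' : ∀ s ∈ Set.Ico (0:ℝ) 1,
      HasDerivWithinAt G (v s (G s)) (Set.Ici s) s := by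
    intro s hs
    have hx := (key s hs).clm_apply (hasDerivWithinAt_const s _ x)
    have hy := (key s hs).clm_apply (hasDerivWithinAt_const s _ y)
    have h2 : HasDerivWithinAt (fun u => adC B (A u x))
        (adC B ((adL B (γ s)).comp (A s) x + A s 0)) (Set.Ici s) s :=
      (adC B).hasFDerivAt.comp_hasDerivWithinAt s hx
    have h3 := h2.clm_apply hy
    convert h3 using 1
    simp only [hv_def, hG_def]
    rw [if_pos (Set.Ico_subset_Icc_self hs)]
    simp only [map_zero, add_zero, ContinuousLinearMap.comp_apply,
      ContinuousLinearMap.add_apply, adC_apply, adL,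
      LinearMap.coe_toContinuousLinearMap']
    exact hB.2 (γ s) (A s x) (A s y)
  have h0 : f 0 = G 0 := by
    simp [hf_def, hG_def, hA0, adC_apply]
  have := ODE_solution_unique_of_mem_Icc_right
    (v := v) (s := fun _ => Set.univ) (K := K)
    (fun s _ => (hv s).lipschitzOnWith)
    hfc hf' (fun _ _ => Set.mem_univ _)
    hGc hG' (fun _ _ => Set.mem_univ _) h0
  have := this ht
  simpa [hf_def, hG_def, adC_apply] using this

/-- For every `t ∈ [0,1]`, the endomorphism `A_γ(t)` is an automorphism of the
Lie algebra `g`: it intertwines the Lie bracket, `A_γ(t)⁅x,y⁆ = ⁅A_γ(t)x, A_γ(t)y⁆`. -/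
theorem transport_bracket {g : Type*}
    [NormedAddCommGroup g] [NormedSpace ℝ g] [FiniteDimensional ℝ g]
    (B : g →ₗ[ℝ] g →ₗ[ℝ] g) (hB : IsLieBracket B)
    (γ : ℝ → g) (hγ : ContinuousOn γ (Set.Icc 0 1)) :
    ∀ t ∈ Set.Icc (0:ℝ) 1, ∀ x y : g,
      transport B γ t (B x y) = B (transport B γ t x) (transport B γ t y) := by
  intro t ht x y
  unfold transport
  by_cases h : ∃ A : ℝ → (g →L[ℝ] g), IsTransport B γ A
  · simp only [dif_pos h]
    exact isTransport_bracket B hB γ hγ h.choose_spec t ht x y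
  · simp only [dif_neg h, ContinuousLinearMap.one_apply]
end

section
/- Let g and h be finite-dimensional real Lie algebras with norms and let φ : g → h be a Lie algebra homomorphism. Then for every continuous path γ : [0,1] → g one has A_{φ∘γ}(t) ∘ φ = φ ∘ A_γ(t) for all t ∈ [0,1], and consequently the induced map P(g) → P(h), γ ↦ φ∘γ, is a group homomorphism for the path-group multiplications: φ∘(γ·δ) = (φ∘γ)·(φ∘δ) for all γ, δ ∈ P(g). -/
open Set intervalIntegral Function
set_option maxHeartbeats 1000000

section Picard
variable {W : Type*} [NormedAddCommGroup W] [NormedSpace ℝ W] [CompleteSpace W]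

theorem exists_linear_ode (L : ℝ → W →L[ℝ] W) (hL : Continuous L) (w₀ : W) :
    ∃ F : ℝ → W, F 0 = w₀ ∧
      (∀ t ∈ Icc (0:ℝ) 1, HasDerivWithinAt F (L t (F t)) (Icc (0:ℝ) 1) t) ∧
      ContinuousOn (fun t => L t (F t)) (Icc (0:ℝ) 1) := by
  haveI : Nonempty ↥(Icc (0:ℝ) 1) := ⟨⟨0, left_mem_Icc.2 zero_le_one⟩⟩
  -- bound on L
  obtain ⟨M₀, hM₀⟩ := (isCompact_Icc (a := (0:ℝ)) (b := 1)).exists_bound_of_continuousOn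
    hL.continuousOn
  set M : ℝ := max M₀ 0 with hMdef
  have hMnn : 0 ≤ M := le_max_right _ _
  have hM : ∀ s ∈ Icc (0:ℝ) 1, ‖L s‖ ≤ M := fun s hs => (hM₀ s hs).trans (le_max_left _ _)
  -- extension of continuous maps on Icc
  set ext : C(Icc (0:ℝ) 1, W) → ℝ → W :=
    fun f s => f (projIcc 0 1 zero_le_one s) with hextdef
  have hext_cont : ∀ f, Continuous (ext f) := fun f => f.continuous.comp continuous_projIcc
  have hG_cont : ∀ f, Continuous (fun s => L s (ext f s)) := fun f =>
    isBoundedBilinearMap_apply.continuous.comp (hL.prodMk (hext_cont f))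
  -- Picard operator
  set T : C(Icc (0:ℝ) 1, W) → C(Icc (0:ℝ) 1, W) := fun f =>
    ⟨fun t => w₀ + ∫ s in (0:ℝ)..(t:ℝ), L s (ext f s),
      continuous_const.add ((intervalIntegral.continuous_primitive
        (fun a b => ((hG_cont f).intervalIntegrable a b)) 0).comp continuous_subtype_val)⟩
    with hTdef
  -- key iterate estimate
  have key : ∀ n : ℕ, ∀ f g : C(Icc (0:ℝ) 1, W), ∀ t : Icc (0:ℝ) 1,
      ‖T^[n] f t - T^[n] g t‖ ≤ M ^ n * (t:ℝ) ^ n / n.factorial * dist f g := by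
    intro n
    induction n with
    | zero =>
      intro f g t
      simpa [dist_eq_norm] using ContinuousMap.dist_apply_le_dist (f := f) (g := g) t
    | succ n ih =>
      intro f g t
      set u := T^[n] f
      set v := T^[n] g
      have ht0 : (0:ℝ) ≤ (t:ℝ) := t.2.1
      have ht1 : (t:ℝ) ≤ 1 := t.2.2
      have hiter : T^[n+1] f t - T^[n+1] g t
          = ∫ s in (0:ℝ)..(t:ℝ), (L s (ext u s) - L s (ext v s)) := by
        rw [iterate_succ_apply', iterate_succ_apply']
        show (w₀ + ∫ s in (0:ℝ)..(t:ℝ), L s (ext u s))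
            - (w₀ + ∫ s in (0:ℝ)..(t:ℝ), L s (ext v s)) = _
        rw [intervalIntegral.integral_sub ((hG_cont u).intervalIntegrable _ _)
          ((hG_cont v).intervalIntegrable _ _)]
        abel
      rw [hiter]
      have hb_cont : Continuous (fun s : ℝ => M ^ (n+1) / n.factorial * dist f g * s ^ n) := by
        exact continuous_const.mul (continuous_pow n)
      calc ‖∫ s in (0:ℝ)..(t:ℝ), (L s (ext u s) - L s (ext v s))‖
          ≤ ∫ s in (0:ℝ)..(t:ℝ), ‖L s (ext u s) - L s (ext v s)‖ :=
            intervalIntegral.norm_integral_le_integral_norm ht0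
        _ ≤ ∫ s in (0:ℝ)..(t:ℝ), M ^ (n+1) / n.factorial * dist f g * s ^ n := by
            apply intervalIntegral.integral_mono_on ht0
              (((hG_cont u).sub (hG_cont v)).norm.intervalIntegrable _ _)
              (hb_cont.intervalIntegrable _ _)
            intro s hs
            have hs01 : s ∈ Icc (0:ℝ) 1 := ⟨hs.1, hs.2.trans ht1⟩
            have hproj : (projIcc 0 1 zero_le_one s : ℝ) = s := by
              rw [projIcc_of_mem _ hs01]
            have h1 : ‖L s (ext u s) - L s (ext v s)‖ ≤ M * ‖ext u s - ext v s‖ := by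
              rw [← map_sub]
              exact (ContinuousLinearMap.le_opNorm _ _).trans
                (mul_le_mul_of_nonneg_right (hM s hs01) (norm_nonneg _))
            have h2 : ‖ext u s - ext v s‖
                ≤ M ^ n * s ^ n / n.factorial * dist f g := by
              have := ih f g (projIcc 0 1 zero_le_one s)
              rw [hproj] at this
              exact this
            calc ‖L s (ext u s) - L s (ext v s)‖ ≤ M * ‖ext u s - ext v s‖ := h1
              _ ≤ M * (M ^ n * s ^ n / n.factorial * dist f g) :=
                  mul_le_mul_of_nonneg_left h2 hMnn
              _ = M ^ (n+1) / n.factorial * dist f g * s ^ n := by ring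
        _ = M ^ (n+1) / n.factorial * dist f g * ((t:ℝ) ^ (n+1) / (n+1)) := by
            rw [intervalIntegral.integral_const_mul, integral_pow]
            simp
        _ = M ^ (n+1) * (t:ℝ) ^ (n+1) / (n+1).factorial * dist f g := by
            rw [Nat.factorial_succ]
            push_cast
            have h1 : ((n:ℝ) + 1) ≠ 0 := by positivity
            have h2 : (n.factorial : ℝ) ≠ 0 := Nat.cast_ne_zero.2 n.factorial_ne_zero
            field_simp
            try ring

  -- choose a contracting iterate
  obtain ⟨n, hn⟩ : ∃ n : ℕ, M ^ n / n.factorial < 1 := by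
    have h := FloorSemiring.tendsto_pow_div_factorial_atTop (K := ℝ) M
    obtain ⟨n, hn⟩ := (h.eventually (eventually_lt_nhds zero_lt_one)).exists
    exact ⟨n, hn⟩
  have hq : (0:ℝ) ≤ M ^ n / n.factorial := by positivity
  set K : NNReal := Real.toNNReal (M ^ n / n.factorial) with hK
  have hKcoe : (K : ℝ) = M ^ n / n.factorial := Real.coe_toNNReal _ hq
  have hLip : LipschitzWith K (T^[n]) := by
    apply LipschitzWith.of_dist_le_mul
    intro f g
    rw [ContinuousMap.dist_le (by positivity)]
    intro t
    rw [dist_eq_norm]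
    calc ‖T^[n] f t - T^[n] g t‖ ≤ M ^ n * (t:ℝ) ^ n / n.factorial * dist f g := key n f g t
      _ ≤ M ^ n * 1 / n.factorial * dist f g := by
          gcongr
          exact pow_le_one₀ t.2.1 t.2.2
      _ = (K : ℝ) * dist f g := by rw [hKcoe]; ring
  have hContr : ContractingWith K (T^[n]) := by
    refine ⟨?_, hLip⟩
    rw [← NNReal.coe_lt_coe, NNReal.coe_one, hKcoe]
    exact hn
  set f₀ : C(Icc (0:ℝ) 1, W) := hContr.fixedPoint (T^[n]) with hf₀
  have hfix : T f₀ = f₀ := hContr.isFixedPt_fixedPoint_iterate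
  -- the solution
  set G : ℝ → W := fun s => L s (ext f₀ s) with hGdef
  have hG : Continuous G := hG_cont f₀
  set F : ℝ → W := fun t => w₀ + ∫ s in (0:ℝ)..t, G s with hFdef
  have hFeq : ∀ t (ht : t ∈ Icc (0:ℝ) 1), F t = ext f₀ t := by
    intro t ht
    have h1 : (T f₀) ⟨t, ht⟩ = f₀ ⟨t, ht⟩ := by rw [hfix]
    have h2 : (T f₀) ⟨t, ht⟩ = F t := rfl
    have h3 : ext f₀ t = f₀ ⟨t, ht⟩ := by
      simp only [hextdef, projIcc_of_mem zero_le_one ht]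
    exact h2.symm.trans (h1.trans h3.symm)
  have hFderiv : ∀ t : ℝ, HasDerivAt F (G t) t := by
    intro t
    have h1 : HasDerivAt (fun u => ∫ s in (0:ℝ)..u, G s) (G t) t :=
      intervalIntegral.integral_hasDerivAt_right (hG.intervalIntegrable _ _)
        (hG.stronglyMeasurableAtFilter _ _) hG.continuousAt
    simpa [hFdef] using h1.const_add w₀
  refine ⟨F, by simp [hFdef], ?_, ?_⟩
  · intro t ht
    have h1 : G t = L t (F t) := by rw [hFeq t ht]
    exact h1 ▸ (hFderiv t).hasDerivWithinAt
  · exact hG.continuousOn.congr fun t ht => by rw [hFeq t ht]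
end Picard

section Transport

variable {g : Type*} [NormedAddCommGroup g] [NormedSpace ℝ g] [FiniteDimensional ℝ g]

lemma continuous_adL (B : g →ₗ[ℝ] g →ₗ[ℝ] g) : Continuous fun x : g => adL B x :=
  (LinearMap.toContinuousLinearMap.toLinearMap.comp B).continuous_of_finiteDimensional

lemma exists_isTransport (B : g →ₗ[ℝ] g →ₗ[ℝ] g) (γ : ℝ → g)
    (hγ : ContinuousOn γ (Icc 0 1)) : ∃ A, IsTransport B γ A := by
  have hγ' : Continuous (fun t : ℝ => γ ((projIcc 0 1 zero_le_one t : Icc (0:ℝ) 1) : ℝ)) :=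
    hγ.comp_continuous (continuous_subtype_val.comp continuous_projIcc)
      (fun x => (projIcc 0 1 zero_le_one x).2)
  set L : ℝ → (g →L[ℝ] g) →L[ℝ] (g →L[ℝ] g) := fun t =>
    ContinuousLinearMap.compL ℝ g g g (adL B (γ ((projIcc 0 1 zero_le_one t : Icc (0:ℝ) 1) : ℝ)))
    with hLdef
  have hLc : Continuous L :=
    (ContinuousLinearMap.compL ℝ g g g).continuous.comp ((continuous_adL B).comp hγ')
  obtain ⟨F, h0, hderiv, hcont⟩ := exists_linear_ode L hLc 1
  have hLval : ∀ t ∈ Icc (0:ℝ) 1, L t (F t) = (adL B (γ t)).comp (F t) := by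
    intro t ht
    simp only [hLdef, ContinuousLinearMap.compL_apply, projIcc_of_mem zero_le_one ht]
  refine ⟨F, h0, ?_, ?_⟩
  · intro t ht
    have := hderiv t ht
    rwa [hLval t ht] at this
  · exact hcont.congr fun t ht => (hLval t ht).symm

lemma isTransport_transport {B : g →ₗ[ℝ] g →ₗ[ℝ] g} {γ : ℝ → g}
    (hex : ∃ A, IsTransport B γ A) : IsTransport B γ (transport B γ) := by
  unfold transport
  rw [dif_pos hex]
  exact hex.choose_spec

end Transport

/-- If `φ : g → h` is a homomorphism of finite-dimensional real Lie algebras,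
then `A_{φ∘γ}(t) ∘ φ = φ ∘ A_γ(t)` for every continuous path `γ` and `t ∈ [0,1]`;
consequently `γ ↦ φ∘γ` is a homomorphism of path groups:
`φ∘(γ·δ) = (φ∘γ)·(φ∘δ)`. -/
theorem transport_naturality {g h : Type*}
    [NormedAddCommGroup g] [NormedSpace ℝ g] [FiniteDimensional ℝ g]
    [NormedAddCommGroup h] [NormedSpace ℝ h] [FiniteDimensional ℝ h]
    (B : g →ₗ[ℝ] g →ₗ[ℝ] g) (hB : IsLieBracket B)
    (B' : h →ₗ[ℝ] h →ₗ[ℝ] h) (hB' : IsLieBracket B')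
    (φ : g →ₗ[ℝ] h) (hφ : ∀ x y : g, φ (B x y) = B' (φ x) (φ y)) :
    (∀ γ : ℝ → g, ContinuousOn γ (Set.Icc 0 1) → ∀ t ∈ Set.Icc (0:ℝ) 1,
      (transport B' (fun s => φ (γ s)) t).comp (LinearMap.toContinuousLinearMap φ)
        = (LinearMap.toContinuousLinearMap φ).comp (transport B γ t)) ∧
    (∀ γ δ : ℝ → g, ContinuousOn γ (Set.Icc 0 1) → ContinuousOn δ (Set.Icc 0 1) →
      ∀ t ∈ Set.Icc (0:ℝ) 1,
        φ (γ t + transport B γ t (δ t))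
          = φ (γ t) + transport B' (fun s => φ (γ s)) t (φ (δ t))) := by
  have φc : Continuous φ := φ.continuous_of_finiteDimensional
  set φL : g →L[ℝ] h := LinearMap.toContinuousLinearMap φ with hφL
  have claim1 : ∀ γ : ℝ → g, ContinuousOn γ (Set.Icc 0 1) → ∀ t ∈ Set.Icc (0:ℝ) 1,
      (transport B' (fun s => φ (γ s)) t).comp φL = φL.comp (transport B γ t) := by
    intro γ hγ t ht
    have hA : IsTransport B γ (transport B γ) :=
      isTransport_transport (exists_isTransport B γ hγ)
    have hA' : IsTransport B' (fun s => φ (γ s)) (transport B' (fun s => φ (γ s))) :=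
      isTransport_transport (exists_isTransport B' _ (φc.comp_continuousOn hγ))
    set A := transport B γ with hAdef
    set A' := transport B' (fun s => φ (γ s)) with hA'def
    set m : ℝ → (h →L[ℝ] h) := fun s =>
      adL B' (φ (γ ((projIcc 0 1 zero_le_one s : Icc (0:ℝ) 1) : ℝ))) with hmdef
    have hmc : Continuous m :=
      ((continuous_adL B').comp φc).comp (hγ.comp_continuous
        (continuous_subtype_val.comp continuous_projIcc)
        (fun x => (projIcc 0 1 zero_le_one x).2))
    have hmval : ∀ s ∈ Icc (0:ℝ) 1, m s = adL B' (φ (γ s)) := fun s hs => by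
      simp only [hmdef, projIcc_of_mem zero_le_one hs]
    obtain ⟨C, hC⟩ := (isCompact_Icc (a := (0:ℝ)) (b := 1)).exists_bound_of_continuousOn
      hmc.continuousOn
    have hCb : ∀ s : ℝ, ‖m s‖ ≤ C := by
      intro s
      have he : m s = m ((projIcc 0 1 zero_le_one s : Icc (0:ℝ) 1) : ℝ) := by
        simp only [hmdef, projIcc_val]
      rw [he]
      exact hC _ (projIcc 0 1 zero_le_one s).2
    have hC0 : (0:ℝ) ≤ C := (norm_nonneg (m 0)).trans (hCb 0)
    set K : NNReal := Real.toNNReal C with hK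
    set v : ℝ → (g →L[ℝ] h) → (g →L[ℝ] h) := fun s F => (m s).comp F with hvdef
    have hv : ∀ s, LipschitzWith K (v s) := by
      intro s
      apply LipschitzWith.of_dist_le_mul
      intro F1 F2
      rw [dist_eq_norm, dist_eq_norm]
      have hsub : v s F1 - v s F2 = (m s).comp (F1 - F2) := by
        simp only [hvdef, ContinuousLinearMap.comp_sub]
      rw [hsub]
      calc ‖(m s).comp (F1 - F2)‖ ≤ ‖m s‖ * ‖F1 - F2‖ :=
            ContinuousLinearMap.opNorm_comp_le _ _
        _ ≤ (K : ℝ) * ‖F1 - F2‖ := by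
            apply mul_le_mul_of_nonneg_right _ (norm_nonneg _)
            rw [hK, Real.coe_toNNReal _ hC0]
            exact hCb s
    have hAc : ContinuousOn A (Icc 0 1) := fun s hs => (hA.2.1 s hs).continuousWithinAt
    have hA'c : ContinuousOn A' (Icc 0 1) := fun s hs => (hA'.2.1 s hs).continuousWithinAt
    set f : ℝ → (g →L[ℝ] h) := fun s => (A' s).comp φL with hfdef
    set gg : ℝ → (g →L[ℝ] h) := fun s => φL.comp (A s) with hggdef
    have hfc : ContinuousOn f (Icc 0 1) :=
      ((ContinuousLinearMap.compL ℝ g h h).flip φL).continuous.comp_continuousOn hA'c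
    have hggc : ContinuousOn gg (Icc 0 1) :=
      (ContinuousLinearMap.compL ℝ g g h φL).continuous.comp_continuousOn hAc
    have hmem : ∀ s ∈ Ico (0:ℝ) 1, Icc (0:ℝ) 1 ∈ nhdsWithin s (Ici s) := by
      intro s hs
      exact mem_nhdsWithin.mpr
        ⟨Iio 1, isOpen_Iio, hs.2, fun x hx => ⟨hs.1.trans hx.2, le_of_lt hx.1⟩⟩
    have hf' : ∀ s ∈ Ico (0:ℝ) 1, HasDerivWithinAt f (v s (f s)) (Ici s) s := by
      intro s hs
      have hsI : s ∈ Icc (0:ℝ) 1 := Ico_subset_Icc_self hs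
      have h1 := (hA'.2.1 s hsI).clm_comp (hasDerivWithinAt_const s (Icc (0:ℝ) 1) φL)
      have h2 : ((adL B' (φ (γ s))).comp (A' s)).comp φL + (A' s).comp (0 : g →L[ℝ] h) = v s (f s) := by
        ext x
        simp [hvdef, hmval s hsI, hfdef]
      rw [h2] at h1
      exact h1.mono_of_mem_nhdsWithin (hmem s hs)
    have hg' : ∀ s ∈ Ico (0:ℝ) 1, HasDerivWithinAt gg (v s (gg s)) (Ici s) s := by
      intro s hs
      have hsI : s ∈ Icc (0:ℝ) 1 := Ico_subset_Icc_self hs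
      have h1 := (hasDerivWithinAt_const s (Icc (0:ℝ) 1) φL).clm_comp (hA.2.1 s hsI)
      have h2 : (0 : g →L[ℝ] h).comp (A s) + φL.comp ((adL B (γ s)).comp (A s))
          = v s (gg s) := by
        ext x
        simp [hvdef, hmval s hsI, adL, hφL, hφ, hggdef]
      rw [h2] at h1
      exact h1.mono_of_mem_nhdsWithin (hmem s hs)
    have ha : f 0 = gg 0 := by
      simp only [hfdef, hggdef, hA.1, hA'.1, ContinuousLinearMap.one_def,
        ContinuousLinearMap.id_comp, ContinuousLinearMap.comp_id]
    exact ODE_solution_unique hv hfc hf' hggc hg' ha ht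
  refine ⟨claim1, ?_⟩
  intro γ δ hγ hδ t ht
  have h1 := claim1 γ hγ t ht
  have h2 := DFunLike.congr_fun h1 (δ t)
  simp only [ContinuousLinearMap.comp_apply, hφL,
    LinearMap.coe_toContinuousLinearMap'] at h2
  rw [map_add, h2]
end
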